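/- arXiv:2208.02098 — 3 statements merged into one kernel-verified Lean document; each statement's English description precedes it below -/
import Mathlib

section
/- The function κ ↦ Γ(κ+1)^{-1/κ} is strictly decreasing on (0,∞), maps κ = 2 to 1/√2, κ = 1 to 1, and tends to e^γ as κ → 0⁺ (where γ is Euler's constant). Consequently, for an EACD(1) model with exponential unit-mean innovations, the tail index κ(α) solving α = Γ(κ+1)^{-1/κ} satisfies: κ > 2 iff α < 1/√2; κ = 2 iff α = 1/√2; 1 < κ < 2 iff 1/√2 < α < 1; κ = 1 iff α = 1; and 0 < κ < 1 iff 1 < α < e^γ. -/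
open Real Filter Set

private lemma logGamma_add_one {x : ℝ} (hx : 0 < x) :
    log (Gamma (x + 1)) = log (Gamma x) + log x := by
  rw [Real.Gamma_add_one hx.ne', Real.log_mul hx.ne' (Real.Gamma_pos_of_pos hx).ne']
  ring

private lemma strictConvexOn_logGamma : StrictConvexOn ℝ (Ioi 0) (log ∘ Gamma) := by
  refine ⟨convex_Ioi 0, fun x hx y hy hxy a b ha hb hab => ?_⟩
  have hx' : (0:ℝ) < x := hx
  have hy' : (0:ℝ) < y := hy
  have hm : 0 < a*x + b*y := by positivity
  have h1 : log (Gamma (a*(x+1) + b*(y+1))) ≤ a * log (Gamma (x+1)) + b * log (Gamma (y+1)) :=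
    convexOn_log_Gamma.2 (mem_Ioi.2 (by linarith)) (mem_Ioi.2 (by linarith)) ha.le hb.le hab
  have heq : a*(x+1) + b*(y+1) = (a*x + b*y) + 1 := by
    have : a + b = 1 := hab; nlinarith [this]
  rw [heq] at h1
  have h2 : a * log x + b * log y < log (a*x + b*y) :=
    strictConcaveOn_log_Ioi.2 hx hy hxy ha hb hab
  have e1 := logGamma_add_one hm
  have e2 := logGamma_add_one hx'
  have e3 := logGamma_add_one hy'
  simp only [Function.comp, smul_eq_mul]
  rw [e1, e2, e3] at h1
  linarith

/-- `g κ = log Γ(κ+1) / κ` is strictly monotone on `(0,∞)`. -/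
private lemma g_strictMono : StrictMonoOn (fun κ : ℝ => log (Gamma (κ + 1)) / κ) (Ioi 0) := by
  intro x hx y hy hxy
  have hx' : (0:ℝ) < x := hx
  have hy' : (0:ℝ) < y := hy
  have key := strictConvexOn_logGamma.secant_strict_mono (a := 1) (x := x + 1) (y := y + 1)
    (mem_Ioi.2 one_pos) (mem_Ioi.2 (by linarith)) (mem_Ioi.2 (by linarith))
    (by intro h; linarith [congrArg id h]) (by intro h; linarith [congrArg id h])
    (by linarith)
  simp only [Function.comp] at key
  rw [Real.Gamma_one, Real.log_one] at key
  have : x + 1 - 1 = x := by ring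
  rw [this] at key
  have : y + 1 - 1 = y := by ring
  rw [this] at key
  simpa using key

/-- `g` tends to `-γ` at `0⁺`. -/
private lemma g_tendsto : Tendsto (fun κ : ℝ => log (Gamma (κ + 1)) / κ)
    (nhdsWithin 0 (Ioi 0)) (nhds (-eulerMascheroniConstant)) := by
  have hd : HasDerivAt (log ∘ Gamma) (-eulerMascheroniConstant) 1 := by
    have h := Real.hasDerivAt_Gamma_one
    have := h.log (by rw [Real.Gamma_one]; norm_num)
    simpa [Real.Gamma_one, Function.comp_def] using this
  have hslope := hasDerivAt_iff_tendsto_slope.mp hd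
  have hmap : Tendsto (fun κ : ℝ => κ + 1) (nhdsWithin 0 (Ioi 0)) (nhdsWithin 1 {(1:ℝ)}ᶜ) := by
    apply tendsto_nhdsWithin_of_tendsto_nhds_of_eventually_within
    · have h0 : Tendsto (fun κ : ℝ => κ + 1) (nhds (0:ℝ)) (nhds ((0:ℝ) + 1)) :=
        (continuous_id.add continuous_const).tendsto 0
      rw [zero_add] at h0
      exact h0.mono_left nhdsWithin_le_nhds
    · filter_upwards [self_mem_nhdsWithin] with x hx
      simp only [mem_compl_iff, mem_singleton_iff]
      intro h; have : x = 0 := by linarith [h]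
      exact absurd this (ne_of_gt hx)
  have := hslope.comp hmap
  have heq : ∀ κ : ℝ, slope (log ∘ Gamma) 1 (κ + 1) = log (Gamma (κ + 1)) / κ := by
    intro κ
    simp [slope, Real.Gamma_one, Function.comp, div_eq_inv_mul]
  refine this.congr fun κ => ?_
  exact heq κ

private lemma f_eq {κ : ℝ} (hκ : 0 < κ) :
    Gamma (κ + 1) ^ (-(1 / κ)) = Real.exp (-(log (Gamma (κ + 1)) / κ)) := by
  rw [Real.rpow_def_of_pos (Real.Gamma_pos_of_pos (by linarith))]
  ring_nf

private lemma f_strictAnti :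
    StrictAntiOn (fun κ : ℝ => Gamma (κ + 1) ^ (-(1 / κ))) (Ioi 0) := by
  intro x hx y hy hxy
  have hx' : (0:ℝ) < x := hx
  have hy' : (0:ℝ) < y := hy
  simp only
  rw [f_eq hx', f_eq hy', Real.exp_lt_exp]
  have := g_strictMono hx hy hxy
  linarith

private lemma f_tendsto :
    Tendsto (fun κ : ℝ => Gamma (κ + 1) ^ (-(1 / κ))) (nhdsWithin 0 (Ioi 0))
      (nhds (Real.exp eulerMascheroniConstant)) := by
  have h1 : Tendsto (fun κ : ℝ => Real.exp (-(log (Gamma (κ + 1)) / κ)))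
      (nhdsWithin 0 (Ioi 0)) (nhds (Real.exp eulerMascheroniConstant)) := by
    have := (Real.continuous_exp.tendsto _).comp g_tendsto.neg
    simpa [Function.comp_def] using this
  refine h1.congr' ?_
  filter_upwards [self_mem_nhdsWithin] with x hx
  exact (f_eq hx).symm

private lemma f_lt_exp_gamma {κ : ℝ} (hκ : 0 < κ) :
    Gamma (κ + 1) ^ (-(1 / κ)) < Real.exp eulerMascheroniConstant := by
  have h1 : -eulerMascheroniConstant ≤ log (Gamma (κ/2 + 1)) / (κ/2) := by
    refine le_of_tendsto g_tendsto ?_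
    filter_upwards [Ioo_mem_nhdsGT (half_pos hκ)] with x hx
    exact (g_strictMono (mem_Ioi.2 hx.1) (mem_Ioi.2 (half_pos hκ)) hx.2).le
  have h2 : log (Gamma (κ/2 + 1)) / (κ/2) < log (Gamma (κ + 1)) / κ :=
    g_strictMono (mem_Ioi.2 (half_pos hκ)) (mem_Ioi.2 hκ) (by linarith)
  rw [f_eq hκ, Real.exp_lt_exp]
  linarith

private lemma f_at_two : Gamma ((2:ℝ) + 1) ^ (-(1 / (2:ℝ))) = 1 / Real.sqrt 2 := by
  have h3 : Gamma ((2:ℝ) + 1) = 2 := by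
    rw [Real.Gamma_add_one two_ne_zero, Real.Gamma_two]; ring
  rw [h3, Real.rpow_neg (by norm_num : (0:ℝ) ≤ 2), ← Real.sqrt_eq_rpow]
  exact (one_div _).symm

private lemma f_at_one : Gamma ((1:ℝ) + 1) ^ (-(1 / (1:ℝ))) = 1 := by
  norm_num [Real.Gamma_two]

/-- Properties of `κ ↦ Γ(κ+1)^(-1/κ)`: strictly decreasing on `(0,∞)`, values at `κ = 2`
and `κ = 1`, limit `e^γ` as `κ → 0⁺`, and the resulting classification of the EACD tail
index `κ(α)` solving `α = Γ(κ+1)^(-1/κ)`. -/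
theorem eacd_tail_index_classification :
    StrictAntiOn (fun κ : ℝ => Real.Gamma (κ + 1) ^ (-(1 / κ))) (Ioi 0) ∧
    Real.Gamma ((2 : ℝ) + 1) ^ (-(1 / (2 : ℝ))) = 1 / Real.sqrt 2 ∧
    Real.Gamma ((1 : ℝ) + 1) ^ (-(1 / (1 : ℝ))) = 1 ∧
    Tendsto (fun κ : ℝ => Real.Gamma (κ + 1) ^ (-(1 / κ))) (nhdsWithin 0 (Ioi 0))
      (nhds (Real.exp Real.eulerMascheroniConstant)) ∧
    ∀ κ α : ℝ, 0 < κ → α = Real.Gamma (κ + 1) ^ (-(1 / κ)) →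
      ((2 < κ ↔ α < 1 / Real.sqrt 2) ∧
       (κ = 2 ↔ α = 1 / Real.sqrt 2) ∧
       (1 < κ ∧ κ < 2 ↔ 1 / Real.sqrt 2 < α ∧ α < 1) ∧
       (κ = 1 ↔ α = 1) ∧
       (κ < 1 ↔ 1 < α ∧ α < Real.exp Real.eulerMascheroniConstant)) := by
  refine ⟨f_strictAnti, f_at_two, f_at_one, f_tendsto, fun κ α hκ hα => ?_⟩
  set f : ℝ → ℝ := fun κ : ℝ => Gamma (κ + 1) ^ (-(1 / κ)) with hf
  have hκm : κ ∈ Ioi (0:ℝ) := mem_Ioi.2 hκ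
  have h1m : (1:ℝ) ∈ Ioi (0:ℝ) := mem_Ioi.2 one_pos
  have h2m : (2:ℝ) ∈ Ioi (0:ℝ) := mem_Ioi.2 two_pos
  have hlt : ∀ a b : ℝ, a ∈ Ioi (0:ℝ) → b ∈ Ioi (0:ℝ) → (f a < f b ↔ b < a) :=
    fun a b ha hb => f_strictAnti.lt_iff_gt ha hb
  have heq : ∀ a b : ℝ, a ∈ Ioi (0:ℝ) → b ∈ Ioi (0:ℝ) → (f a = f b ↔ a = b) := by
    intro a b ha hb
    exact ⟨fun h => f_strictAnti.injOn ha hb h, fun h => h ▸ rfl⟩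
  have hα2 : α = f κ := hα
  have hf2 : f 2 = 1 / Real.sqrt 2 := f_at_two
  have hf1 : f 1 = 1 := f_at_one
  have k2 : 2 < κ ↔ f κ < f 2 := (hlt κ 2 hκm h2m).symm
  have k1 : 1 < κ ↔ f κ < f 1 := (hlt κ 1 hκm h1m).symm
  have k2' : κ < 2 ↔ f 2 < f κ := (hlt 2 κ h2m hκm).symm
  have k1' : κ < 1 ↔ f 1 < f κ := (hlt 1 κ h1m hκm).symm
  have e2 : κ = 2 ↔ f κ = f 2 := ⟨fun h => h ▸ rfl, fun h => (heq κ 2 hκm h2m).mp h⟩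
  have e1 : κ = 1 ↔ f κ = f 1 := ⟨fun h => h ▸ rfl, fun h => (heq κ 1 hκm h1m).mp h⟩
  rw [hf2] at k2 k2' e2
  rw [hf1] at k1 k1' e1
  rw [hα2]
  refine ⟨k2, e2, ?_, e1, ?_⟩
  · exact ⟨fun h => ⟨k2'.mp h.2, k1.mp h.1⟩, fun h => ⟨k1.mpr h.2, k2'.mpr h.1⟩⟩
  · exact ⟨fun h => ⟨k1'.mp h, f_lt_exp_gamma hκ⟩, fun h => k1'.mpr h.1⟩
end

section
/- Let ε > 0 satisfy E[ε] = 1 and s² = E[ε²] < ∞ with ε non-degenerate, and fix α > 0. Define h(κ) = E[(αε)^κ] for κ ≥ 0. Then h is convex, h(0) = 1, h(1) = α, and h(2) = α²s². Consequently, if there is a unique positive solution κ to h(κ)=1, then: κ > 2 when α < 1/s, κ = 2 when α = 1/s, 1 < κ < 2 when 1/s < α < 1, κ = 1 when α = 1, and 0 < κ < 1 when α > 1 (with E[ln(αε)] < 0). -/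
open MeasureTheory Set

/-- Convexity of `h(κ) = E[(α ε)^κ]`, its values at `0, 1, 2`, and the resulting
classification of the unique positive root of `h(κ) = 1` in terms of `α` and `s`. -/
theorem acd_moment_function_convex_and_root_classification
    {Ω : Type*} [MeasurableSpace Ω] (μ : Measure Ω) [IsProbabilityMeasure μ]
    (ε : Ω → ℝ) (s α : ℝ) (hα : 0 < α)
    (hpos : ∀ᵐ ω ∂μ, 0 < ε ω)
    (hmean : ∫ ω, ε ω ∂μ = 1)
    (hsq : ∫ ω, (ε ω) ^ 2 ∂μ = s ^ 2) (hs : 0 < s)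
    (hnondeg : ¬ (∀ᵐ ω ∂μ, ε ω = 1))
    (hint : ∀ κ : ℝ, 0 ≤ κ → Integrable (fun ω => (α * ε ω) ^ κ) μ) :
    ConvexOn ℝ (Ici 0) (fun κ : ℝ => ∫ ω, (α * ε ω) ^ κ ∂μ) ∧
    (∫ ω, (α * ε ω) ^ (0 : ℝ) ∂μ) = 1 ∧
    (∫ ω, (α * ε ω) ^ (1 : ℝ) ∂μ) = α ∧
    (∫ ω, (α * ε ω) ^ (2 : ℝ) ∂μ) = α ^ 2 * s ^ 2 ∧
    ∀ κ₀ : ℝ, 0 < κ₀ → (∫ ω, (α * ε ω) ^ κ₀ ∂μ) = 1 →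
      (∀ κ : ℝ, 0 < κ → (∫ ω, (α * ε ω) ^ κ ∂μ) = 1 → κ = κ₀) →
      ((α < 1 / s → 2 < κ₀) ∧
       (α = 1 / s → κ₀ = 2) ∧
       (1 / s < α → α < 1 → 1 < κ₀ ∧ κ₀ < 2) ∧
       (α = 1 → κ₀ = 1) ∧
       (1 < α → (∫ ω, Real.log (α * ε ω) ∂μ) < 0 → 0 < κ₀ ∧ κ₀ < 1)) := by
  set h : ℝ → ℝ := fun κ => ∫ ω, (α * ε ω) ^ κ ∂μ with hh
  have h0 : h 0 = 1 := by
    simp [hh, Real.rpow_zero]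
  have h1 : h 1 = α := by
    simp only [hh, Real.rpow_one, integral_const_mul, hmean, mul_one]
  have h2 : h 2 = α ^ 2 * s ^ 2 := by
    have : ∀ ω, (α * ε ω) ^ (2 : ℝ) = α ^ 2 * (ε ω) ^ 2 := by
      intro ω
      rw [show ((2:ℝ) = ((2:ℕ):ℝ)) by norm_num, Real.rpow_natCast, mul_pow]
    simp only [hh, this, integral_const_mul, hsq]
  have hconv : ConvexOn ℝ (Ici 0) h := by
    refine ⟨convex_Ici 0, ?_⟩
    intro x hx y hy a b ha hb hab
    simp only [smul_eq_mul, hh]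
    have hix : Integrable (fun ω => (α * ε ω) ^ x) μ := hint x hx
    have hiy : Integrable (fun ω => (α * ε ω) ^ y) μ := hint y hy
    have hixy : Integrable (fun ω => (α * ε ω) ^ (a * x + b * y)) μ :=
      hint _ (add_nonneg (mul_nonneg ha hx) (mul_nonneg hb hy))
    have key : ∀ᵐ ω ∂μ, (α * ε ω) ^ (a * x + b * y)
        ≤ a * (α * ε ω) ^ x + b * (α * ε ω) ^ y := by
      filter_upwards [hpos] with ω hω
      have hz : 0 < α * ε ω := mul_pos hα hω
      have := Real.geom_mean_le_arith_mean2_weighted ha hb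
        (Real.rpow_pos_of_pos hz x).le (Real.rpow_pos_of_pos hz y).le hab
      calc (α * ε ω) ^ (a * x + b * y)
          = ((α * ε ω) ^ x) ^ a * ((α * ε ω) ^ y) ^ b := by
            rw [Real.rpow_add hz, mul_comm a x, mul_comm b y,
              Real.rpow_mul hz.le, Real.rpow_mul hz.le]
        _ ≤ a * (α * ε ω) ^ x + b * (α * ε ω) ^ y := this
    calc (∫ ω, (α * ε ω) ^ (a * x + b * y) ∂μ)
        ≤ ∫ ω, (a * (α * ε ω) ^ x + b * (α * ε ω) ^ y) ∂μ :=
          integral_mono_ae hixy ((hix.const_mul a).add (hiy.const_mul b)) key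
      _ = a * (∫ ω, (α * ε ω) ^ x ∂μ) + b * (∫ ω, (α * ε ω) ^ y ∂μ) := by
          rw [integral_add (hix.const_mul a) (hiy.const_mul b),
            integral_const_mul, integral_const_mul]
  refine ⟨hconv, h0, h1, h2, ?_⟩
  intro κ₀ hκ₀ hroot0 huniq
  have hroot : h κ₀ = 1 := hroot0
  -- helper lemmas from convexity
  have hA : ∀ t : ℝ, 0 ≤ t → t ≤ κ₀ → h t ≤ 1 := by
    intro t ht htκ
    have hlam : 0 ≤ t / κ₀ := div_nonneg ht hκ₀.le
    have hlam1 : t / κ₀ ≤ 1 := by rw [div_le_one hκ₀]; exact htκ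
    have := hconv.2 (self_mem_Ici) (mem_Ici.2 hκ₀.le)
      (by linarith : (0:ℝ) ≤ 1 - t / κ₀) hlam (by ring)
    have heq : (1 - t / κ₀) • (0:ℝ) + (t / κ₀) • κ₀ = t := by
      rw [smul_eq_mul, smul_eq_mul, mul_zero, zero_add, div_mul_cancel₀ _ hκ₀.ne']
    rw [heq] at this
    rw [h0, hroot] at this
    simp only [smul_eq_mul] at this
    linarith
  have hB : ∀ t : ℝ, κ₀ ≤ t → 1 ≤ h t := by
    intro t htκ
    rcases eq_or_lt_of_le htκ with rfl | hlt
    · exact hroot.ge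
    have htpos : 0 < t := hκ₀.trans hlt
    have hlam : 0 < κ₀ / t := div_pos hκ₀ htpos
    have hlam1 : κ₀ / t ≤ 1 := by rw [div_le_one htpos]; exact htκ
    have := hconv.2 (self_mem_Ici) (mem_Ici.2 htpos.le)
      (by linarith : (0:ℝ) ≤ 1 - κ₀ / t) hlam.le (by ring)
    have heq : (1 - κ₀ / t) • (0:ℝ) + (κ₀ / t) • t = κ₀ := by
      rw [smul_eq_mul, smul_eq_mul, mul_zero, zero_add, div_mul_cancel₀ _ htpos.ne']
    rw [heq] at this
    rw [h0, hroot] at this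
    simp only [smul_eq_mul] at this
    nlinarith
  refine ⟨?_, ?_, ?_, ?_, ?_⟩
  · intro hlt
    by_contra hc
    push_neg at hc
    have hB2 := hB 2 hc
    rw [h2] at hB2
    have hαs : α * s < 1 := (lt_div_iff₀ hs).mp hlt
    nlinarith [mul_pos hα hs]
  · intro heqα
    have h21 : h 2 = 1 := by
      rw [h2, heqα]; field_simp
    exact (huniq 2 (by norm_num) h21).symm
  · intro hlt hlt1
    have hαs : 1 < α * s := (div_lt_iff₀ hs).mp hlt
    constructor
    · by_contra hc
      push_neg at hc
      have := hB 1 hc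
      rw [h1] at this
      linarith
    · by_contra hc
      push_neg at hc
      have := hA 2 (by norm_num) hc
      rw [h2] at this
      nlinarith
  · intro heqα
    have h11 : h 1 = 1 := by rw [h1, heqα]
    exact (huniq 1 one_pos h11).symm
  · intro hgt _
    refine ⟨hκ₀, ?_⟩
    by_contra hc
    push_neg at hc
    have := hA 1 zero_le_one hc
    rw [h1] at this
    linarith
end

section
/- Let {x_i} be strictly stationary with regularly varying tail of index κ > 0 (P(x > z) ~ c z^{-κ}) and suppose T^{-1/κ} max_{1 ≤ s ≤ T} x_s converges in distribution to a Fréchet random variable. Let ν_T = N_T + 1 where N_T is the counting process of the partial sums of {x_i}, and suppose ν_T/T → 1/μ almost surely with μ = E[x] < ∞ (κ > 1). Then for any β > 1/κ, x_{ν_T} / T^β → 0 in probability as T → ∞. -/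
open MeasureTheory ProbabilityTheory Filter
open scoped ENNReal

/-- Negligibility of the overshoot duration `x_{ν_T}`, `ν_T = N_T + 1`, in the finite-mean
case: under a regularly varying marginal tail of index `κ > 1`, Fréchet convergence of the
normalized maxima, and `ν_T/T → 1/μ` a.s., one has `x_{ν_T}/T^β → 0` in probability for
every `β > 1/κ`. -/
theorem overshoot_negligible_finite_mean
    {Ω : Type*} [MeasurableSpace Ω] (μ : Measure Ω) [IsProbabilityMeasure μ]
    (x : ℕ → Ω → ℝ) (hmeas : ∀ i, Measurable (x i))
    (hpos : ∀ᵐ ω ∂μ, ∀ i, 0 < x i ω)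
    (hident : ∀ i, IdentDistrib (x i) (x 0) μ μ)
    (c κ μv : ℝ) (hc : 0 < c) (hκ : 1 < κ) (hμv : 0 < μv)
    (htail : Tendsto (fun z : ℝ => z ^ κ * (μ {ω | z < x 0 ω}).toReal) atTop (nhds c))
    (hfrechet : ∀ t : ℝ, 0 < t → Tendsto
      (fun n : ℕ => (μ {ω | ∀ s ∈ Finset.range n, x s ω ≤ t * (n : ℝ) ^ (1/κ)}).toReal)
      atTop (nhds (Real.exp (-c * t ^ (-κ)))))
    (N : ℝ → Ω → ℕ)
    (hN : ∀ ω, ∀ T : ℝ, 0 ≤ T → ∀ k : ℕ,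
      ((∑ i ∈ Finset.range k, x i ω) ≤ T ↔ k ≤ N T ω))
    (hν : ∀ᵐ ω ∂μ, Tendsto (fun T : ℝ => ((N T ω : ℝ) + 1) / T) atTop (nhds (1 / μv))) :
    ∀ β : ℝ, 1/κ < β → ∀ δ : ℝ, 0 < δ →
      Tendsto (fun T : ℝ => (μ {ω | δ * T ^ β < x (N T ω) ω}).toReal) atTop (nhds 0) := by
  intro β hβ δ hδ
  have hκ0 : 0 < κ := lt_trans one_pos hκ
  have hβ0 : 0 < β := lt_trans (by positivity) hβ
  have hβκ : 1 < β * κ := by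
    rw [div_lt_iff₀ hκ0] at hβ; linarith
  set M : ℝ := 2 / μv with hMdef
  have hM0 : 0 < M := by positivity
  have hM : 1 / μv < M := by
    rw [hMdef, div_lt_div_iff₀ hμv hμv]; nlinarith
  set k : ℝ → ℕ := fun T => ⌈M * T⌉₊ with hkdef
  set A : ℝ → Set Ω := fun T => {ω | ∑ i ∈ Finset.range (k T), x i ω ≤ T} with hAdef
  have hAmble : ∀ T, MeasurableSet (A T) := fun T =>
    measurableSet_le (Finset.measurable_sum _ (fun i _ => hmeas i)) measurable_const
  -- the first term tends to 0
  have hg : Tendsto (fun T => μ (A T)) atTop (nhds 0) := by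
    have := tendsto_measure_of_ae_tendsto_indicator_of_isFiniteMeasure (μ := μ)
      (A := (∅ : Set Ω)) atTop MeasurableSet.empty hAmble ?_
    · simpa using this
    · filter_upwards [hν] with ω hω
      have h1 : ∀ᶠ T : ℝ in atTop, ((N T ω : ℝ) + 1) / T < M :=
        hω.eventually (Filter.Tendsto.eventually_lt_const hM tendsto_id)
      filter_upwards [h1, eventually_ge_atTop (1 : ℝ)] with T hT hT1
      simp only [Set.mem_empty_iff_false, iff_false, hAdef, Set.mem_setOf_eq]
      intro hsum
      rw [hN ω T (by linarith) (k T)] at hsum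
      have hkN : (k T : ℝ) ≤ (N T ω : ℝ) := by exact_mod_cast hsum
      have hMT : (N T ω : ℝ) + 1 < M * T := by
        rw [div_lt_iff₀ (by linarith : (0:ℝ) < T)] at hT; linarith
      have hceil : M * T ≤ (k T : ℝ) := Nat.le_ceil _
      linarith
  have hg' : Tendsto (fun T => (μ (A T)).toReal) atTop (nhds 0) := by
    simpa [Function.comp_def] using (ENNReal.tendsto_toReal (by simp)).comp hg
  -- tail probability notation
  set p : ℝ → ℝ := fun w => (μ {ω | w < x 0 ω}).toReal with hpdef
  set z : ℝ → ℝ := fun T => δ * T ^ β with hzdef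
  have hz : Tendsto z atTop atTop := (tendsto_rpow_atTop hβ0).const_mul_atTop hδ
  -- second term tends to 0
  have hB : Tendsto (fun T => (z T) ^ κ * p (z T)) atTop (nhds c) := htail.comp hz
  have hA' : Tendsto (fun T => (k T : ℝ) / (z T) ^ κ) atTop (nhds 0) := by
    have hu : Tendsto (fun T : ℝ => δ ^ (-κ) * (M * T ^ (1 - β * κ) + T ^ (-(β * κ))))
        atTop (nhds 0) := by
      have h1 : Tendsto (fun T : ℝ => T ^ (1 - β * κ)) atTop (nhds 0) := by
        have := tendsto_rpow_neg_atTop (by linarith : 0 < β * κ - 1)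
        refine this.congr (fun T => ?_)
        congr 1; ring
      have h2 : Tendsto (fun T : ℝ => T ^ (-(β * κ))) atTop (nhds 0) :=
        tendsto_rpow_neg_atTop (by linarith)
      have := ((h1.const_mul M).add h2).const_mul (δ ^ (-κ))
      simpa using this
    refine squeeze_zero' ?_ ?_ hu
    · filter_upwards [eventually_ge_atTop (1 : ℝ)] with T hT
      have hzT : 0 < z T := mul_pos hδ (Real.rpow_pos_of_pos (by linarith) β)
      positivity
    · filter_upwards [eventually_ge_atTop (1 : ℝ)] with T hT
      have hT0 : (0:ℝ) < T := by linarith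
      have hzκ : (z T) ^ κ = δ ^ κ * T ^ (β * κ) := by
        show (δ * T ^ β) ^ κ = _
        rw [Real.mul_rpow (le_of_lt hδ) (Real.rpow_nonneg (le_of_lt hT0) β),
          ← Real.rpow_mul (le_of_lt hT0)]
      have hk_le : (k T : ℝ) ≤ M * T + 1 :=
        le_of_lt (Nat.ceil_lt_add_one (by positivity))
      have hδκ : (0:ℝ) < δ ^ κ := Real.rpow_pos_of_pos hδ κ
      have hTβκ : (0:ℝ) < T ^ (β * κ) := Real.rpow_pos_of_pos hT0 (β * κ)
      have hRHS : δ ^ (-κ) * (M * T ^ (1 - β * κ) + T ^ (-(β * κ)))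
          = (M * T + 1) / (δ ^ κ * T ^ (β * κ)) := by
        rw [Real.rpow_neg (le_of_lt hδ), Real.rpow_neg (le_of_lt hT0),
          Real.rpow_sub hT0, Real.rpow_one]
        field_simp
        try ring
      rw [hzκ, hRHS]
      gcongr
  have hh : Tendsto (fun T => (k T : ℝ) * p (z T)) atTop (nhds 0) := by
    have := hA'.mul hB
    rw [zero_mul] at this
    refine this.congr' ?_
    filter_upwards [eventually_ge_atTop (1 : ℝ)] with T hT
    have hzT : 0 < z T := mul_pos hδ (Real.rpow_pos_of_pos (by linarith) β)
    have hzκ : (0:ℝ) < (z T) ^ κ := Real.rpow_pos_of_pos hzT κ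
    field_simp
  -- the main bound
  have key : ∀ᶠ T : ℝ in atTop, (μ {ω | δ * T ^ β < x (N T ω) ω}).toReal ≤
      (μ (A T)).toReal + (k T : ℝ) * p (z T) := by
    filter_upwards [eventually_ge_atTop (0 : ℝ)] with T hT0
    have hsub : {ω | δ * T ^ β < x (N T ω) ω} ⊆
        A T ∪ ⋃ s ∈ Finset.range (k T), {ω | z T < x s ω} := by
      intro ω hω
      by_cases hc' : ω ∈ A T
      · exact Or.inl hc'
      · refine Or.inr ?_
        have hnot : ¬ (k T ≤ N T ω) := by
          intro hcon
          exact hc' ((hN ω T hT0 (k T)).mpr hcon)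
        exact Set.mem_iUnion₂.mpr ⟨N T ω, Finset.mem_range.mpr (lt_of_not_ge hnot), hω⟩
    have heq : ∀ s, μ {ω | z T < x s ω} = μ {ω | z T < x 0 ω} := by
      intro s
      have := (hident s).measure_mem_eq (measurableSet_Ioi (a := z T))
      simpa [Set.preimage] using this
    have hle1 : μ {ω | δ * T ^ β < x (N T ω) ω} ≤
        μ (A T) + (k T : ℝ≥0∞) * μ {ω | z T < x 0 ω} := by
      refine le_trans (measure_mono hsub) (le_trans (measure_union_le _ _) ?_)
      refine add_le_add (le_refl _) (le_trans (measure_biUnion_finset_le _ _) ?_)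
      have hsumeq : ∑ s ∈ Finset.range (k T), μ {ω | z T < x s ω}
          = (k T : ℝ≥0∞) * μ {ω | z T < x 0 ω} := by
        rw [Finset.sum_congr rfl (fun s _ => heq s), Finset.sum_const, Finset.card_range,
          nsmul_eq_mul]
      exact le_of_eq hsumeq
    have hfin : μ (A T) + (k T : ℝ≥0∞) * μ {ω | z T < x 0 ω} ≠ ⊤ :=
      ENNReal.add_ne_top.mpr ⟨measure_ne_top μ _,
        ENNReal.mul_ne_top (ENNReal.natCast_ne_top _) (measure_ne_top μ _)⟩
    calc (μ {ω | δ * T ^ β < x (N T ω) ω}).toReal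
        ≤ (μ (A T) + (k T : ℝ≥0∞) * μ {ω | z T < x 0 ω}).toReal :=
          ENNReal.toReal_mono hfin hle1
      _ = (μ (A T)).toReal + (k T : ℝ) * p (z T) := by
          rw [ENNReal.toReal_add (measure_ne_top μ _)
            (ENNReal.mul_ne_top (ENNReal.natCast_ne_top _) (measure_ne_top μ _)),
            ENNReal.toReal_mul, ENNReal.toReal_natCast]
  -- conclude
  have hlim : Tendsto (fun T => (μ (A T)).toReal + (k T : ℝ) * p (z T)) atTop (nhds 0) := by
    simpa using hg'.add hh
  exact squeeze_zero' (Eventually.of_forall (fun T => ENNReal.toReal_nonneg)) key hlim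
end
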